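/- Let V be a finite-dimensional real vector space with a positive definite inner product g and a nondegenerate alternating bilinear form ω. Then there exists a linear map J : V → V with J ∘ J = -id such that, writing S for the g-skew-adjoint operator with ω(X,Y) = g(X, S Y), one has J = S ∘ R⁻¹ where R is the positive definite square root of -S². In particular, every finite-dimensional real vector space carrying both an inner product and a nondegenerate alternating form admits a complex structure. -/

import Mathlib

open scoped RealInnerProductSpace

/-- A finite-dimensional real inner product space carrying a nondegenerate
alternating bilinear form `ω` admits a complex structure `J = S ∘ R⁻¹`, where
`S` is the operator with `ω X Y = ⟪X, S Y⟫` and `R` is the positive definite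
square root of `-S²`. -/
theorem stmt_6 (V : Type*) [NormedAddCommGroup V] [InnerProductSpace ℝ V]
    [FiniteDimensional ℝ V]
    (ω : V →ₗ[ℝ] V →ₗ[ℝ] ℝ)
    (halt : ∀ X Y : V, ω X Y = -ω Y X)
    (hnd : ∀ X : V, (∀ Y : V, ω X Y = 0) → X = 0) :
    ∃ S R J : V →ₗ[ℝ] V,
      (∀ X Y : V, ω X Y = ⟪X, S Y⟫) ∧
      (∀ X Y : V, ⟪R X, Y⟫ = ⟪X, R Y⟫) ∧
      (∀ X : V, X ≠ 0 → 0 < ⟪R X, X⟫) ∧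
      R ∘ₗ R = -(S ∘ₗ S) ∧
      Function.Bijective R ∧
      J ∘ₗ R = S ∧
      (∀ v : V, J (J v) = -v) := by
  classical
  -- construct S
  obtain ⟨S, hS⟩ : ∃ S : V →ₗ[ℝ] V, ∀ X Y, ω X Y = ⟪X, S Y⟫ := by
    refine ⟨{ toFun := fun Y => (InnerProductSpace.toDual ℝ V).symm
                (LinearMap.toContinuousLinearMap (ω.flip Y)),
              map_add' := ?_, map_smul' := ?_ }, ?_⟩
    · intro y z; simp [map_add]
    · intro r y; simp [map_smul]
    · intro X Y
      rw [real_inner_comm]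
      simp [InnerProductSpace.toDual_symm_apply]
  -- skew-adjointness of S
  have hskew : ∀ X Y : V, ⟪S X, Y⟫ = -⟪X, S Y⟫ := by
    intro X Y
    rw [real_inner_comm, ← hS, ← hS, halt]
  -- S is injective
  have hSinj : Function.Injective S := by
    rw [injective_iff_map_eq_zero]
    intro Y hY
    refine hnd Y fun X => ?_
    rw [halt, hS, hY, inner_zero_right, neg_zero]
  -- the operator T = -(S ∘ S)
  set T : V →ₗ[ℝ] V := -(S ∘ₗ S) with hT
  have hTapp : ∀ x : V, T x = -(S (S x)) := fun x => rfl
  have hTsymm : T.IsSymmetric := by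
    intro x y
    simp only [hTapp, inner_neg_left, inner_neg_right, hskew, neg_neg]
  have hTpos : ∀ x : V, ⟪T x, x⟫ = ⟪S x, S x⟫ := by
    intro x
    rw [hTapp, inner_neg_left, hskew, neg_neg, real_inner_comm]
  -- spectral theorem
  set n := Module.finrank ℝ V with hnn
  have hn : Module.finrank ℝ V = n := rfl
  set b := hTsymm.eigenvectorBasis hn with hbdef
  set μ := hTsymm.eigenvalues hn with hμdef
  have hb : ∀ i, T (b i) = μ i • b i := fun i => hTsymm.apply_eigenvectorBasis hn i
  have hμpos : ∀ i, 0 < μ i := by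
    intro i
    have hbne : b i ≠ 0 := b.toBasis.ne_zero i
    have h1 : ⟪T (b i), b i⟫ = μ i := by
      rw [hb i, real_inner_smul_left, real_inner_self_eq_norm_sq, b.orthonormal.1 i]
      ring
    rw [← h1, hTpos]
    have hSne : S (b i) ≠ 0 := fun h => hbne (hSinj (by rw [h, map_zero]))
    rw [real_inner_self_eq_norm_sq]
    exact pow_pos (norm_pos_iff.mpr hSne) 2
  -- the square root R
  set R : V →ₗ[ℝ] V := b.toBasis.constr ℝ (fun i => Real.sqrt (μ i) • b i) with hRdef
  have hRb : ∀ i, R (b i) = Real.sqrt (μ i) • b i := by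
    intro i
    have := b.toBasis.constr_basis ℝ (fun i => Real.sqrt (μ i) • b i) i
    rwa [OrthonormalBasis.coe_toBasis] at this
  -- inner product formula for R
  have key : ∀ x y : V, ⟪R x, y⟫ = ∑ i, Real.sqrt (μ i) * (b.repr x i * b.repr y i) := by
    intro x y
    conv_lhs => rw [← b.toBasis.sum_repr x]
    rw [map_sum, sum_inner]
    refine Finset.sum_congr rfl fun i _ => ?_
    rw [LinearMap.map_smul, OrthonormalBasis.coe_toBasis, hRb i,
      OrthonormalBasis.coe_toBasis_repr_apply, real_inner_smul_left, real_inner_smul_left,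
      ← OrthonormalBasis.repr_apply_apply]
    ring
  -- R is symmetric
  have hRsymm : ∀ x y : V, ⟪R x, y⟫ = ⟪x, R y⟫ := by
    intro x y
    rw [key, real_inner_comm, key]
    exact Finset.sum_congr rfl fun i _ => by ring
  -- R is positive definite
  have hRpos : ∀ x : V, x ≠ 0 → 0 < ⟪R x, x⟫ := by
    intro x hx
    rw [key]
    have hxr : b.repr x ≠ 0 := by
      intro h
      exact hx (by simpa using congrArg b.repr.symm h)
    obtain ⟨i, hi⟩ := (Function.ne_iff (f₁ := (b.repr x : Fin n → ℝ)) (f₂ := 0)).mp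
      (fun h => hxr (WithLp.ofLp_injective 2 h))
    refine Finset.sum_pos' (fun j _ => mul_nonneg (Real.sqrt_nonneg _) (mul_self_nonneg _))
      ⟨i, Finset.mem_univ i, ?_⟩
    exact mul_pos (Real.sqrt_pos.mpr (hμpos i)) (mul_self_pos.mpr hi)
  -- R acts by √c on eigenvectors of T
  have hRv : ∀ (c : ℝ) (v : V), T v = c • v → R v = Real.sqrt c • v := by
    intro c v hv
    have hcoef : ∀ i, μ i * b.repr v i = c * b.repr v i := by
      intro i
      have h1 : ⟪T (b i), v⟫ = ⟪b i, T v⟫ := hTsymm (b i) v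
      rw [hb i, hv, real_inner_smul_left, real_inner_smul_right] at h1
      simpa [OrthonormalBasis.repr_apply_apply] using h1
    conv_lhs => rw [← b.toBasis.sum_repr v]
    conv_rhs => rw [← b.toBasis.sum_repr v]
    rw [map_sum, Finset.smul_sum]
    refine Finset.sum_congr rfl fun i _ => ?_
    rw [LinearMap.map_smul, OrthonormalBasis.coe_toBasis, hRb i,
      OrthonormalBasis.coe_toBasis_repr_apply]
    rcases eq_or_ne (b.repr v i) 0 with h | h
    · simp [h]
    · have hμc : μ i = c := mul_right_cancel₀ h (hcoef i)
      rw [hμc, smul_comm]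
  -- R ∘ R = T
  have hRR : R ∘ₗ R = -(S ∘ₗ S) := by
    rw [← hT]
    refine b.toBasis.ext fun i => ?_
    rw [LinearMap.comp_apply, OrthonormalBasis.coe_toBasis, hRb i, map_smul, hRb i, hb i,
      smul_smul, Real.mul_self_sqrt (hμpos i).le]
  have hRRapp : ∀ x, R (R x) = -(S (S x)) := fun x => by
    simpa using DFunLike.congr_fun hRR x
  -- R bijective
  have hRinj : Function.Injective R := by
    rw [injective_iff_map_eq_zero]
    intro x hx
    by_contra hx0
    have h := hRpos x hx0
    rw [hx] at h
    simp at h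
  have hRbij : Function.Bijective R :=
    ⟨hRinj, LinearMap.injective_iff_surjective.mp hRinj⟩
  -- S and R commute
  have hTS : ∀ x, T (S x) = S (T x) := fun x => by rw [hTapp, hTapp, map_neg]
  have hcommb : ∀ i, R (S (b i)) = S (R (b i)) := by
    intro i
    rw [hRb i, map_smul]
    exact hRv (μ i) (S (b i)) (by rw [hTS, hb i, map_smul])
  have hcomm : R ∘ₗ S = S ∘ₗ R := b.toBasis.ext fun i => by
    simpa [OrthonormalBasis.coe_toBasis] using hcommb i
  have hcommR : ∀ x, R (S x) = S (R x) := fun x => DFunLike.congr_fun hcomm x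
  -- the inverse of R and the complex structure J
  let e : V ≃ₗ[ℝ] V := LinearEquiv.ofBijective R hRbij
  have heR : ∀ x, e.symm (R x) = x := fun x => e.symm_apply_apply x
  have hRe : ∀ x, R (e.symm x) = x := fun x => e.apply_symm_apply x
  refine ⟨S, R, S ∘ₗ (e.symm : V →ₗ[ℝ] V), hS, hRsymm, hRpos, hRR, hRbij, ?_, ?_⟩
  · ext x
    simp only [LinearMap.comp_apply, LinearEquiv.coe_coe]
    rw [heR]
  · intro v
    simp only [LinearMap.comp_apply, LinearEquiv.coe_coe]
    have hRJ : ∀ x, R (S (e.symm x)) = S x := by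
      intro x; rw [hcommR, hRe]
    apply hRinj; apply hRinj
    rw [hRJ, hcommR, hRJ, hRRapp, map_neg, map_neg, neg_neg]
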